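/- Under Assumptions 1.1, 1.2 and 1.3, there exist random variables Ĉ₁ and t̂ with 1 ≤ Ĉ₁ < ∞ and 0 < t̂ < 1 everywhere, and, for every real ε > 0, a finite nonnegative integer-valued random variable τ, such that almost surely on Λ, for all n > τ: (1) max_{n≤k≤a(n,t̂)} ‖θ_k − θ_n‖ ≤ Ĉ₁(‖∇f(θ_n)‖ + γ_n^{−r}(ξ + ε)); (2) max_{n≤k≤a(n,t̂)} (f(θ_k) − f(θ_n)) ≤ Ĉ₁(γ_n^{−r}‖∇f(θ_n)‖(ξ + ε) + γ_n^{−2r}(ξ + ε)²); (3) f(θ_{a(n,t̂)}) − f(θ_n) + (t̂/2)‖∇f(θ_n)‖² ≤ Ĉ₁(γ_n^{−r}‖∇f(θ_n)‖(ξ + ε) + γ_n^{−2r}(ξ + ε)²); (4) 2(f(θ_{a(n,t̂)}) − f(θ_n)) + (t̂/2)‖∇f(θ_n)‖² + ‖∇f(θ_n)‖·‖θ_{a(n,t̂)} − θ_n‖ ≤ Ĉ₁(γ_n^{−r}‖∇f(θ_n)‖(ξ + ε) + γ_n^{−2r}(ξ + ε)²). -/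

import Mathlib

open MeasureTheory Filter

set_option maxHeartbeats 2000000

open Metric RealInnerProductSpace


section blocks

lemma locLip_bound {E F : Type*} [NormedAddCommGroup E] [NormedAddCommGroup F]
    (g : E → F) (hg : LocallyLipschitz g) {K : Set E} (hK : IsCompact K) :
    ∃ L : ℝ, 0 ≤ L ∧ ∀ x ∈ K, ∀ y ∈ K, ‖g x - g y‖ ≤ L * ‖x - y‖ := by
  obtain ⟨C, hC⟩ := hK.exists_bound_of_continuousOn hg.continuous.continuousOn
  choose Kf t ht hlip using hg
  obtain ⟨F₀, hF₀⟩ := hK.elim_nhds_subcover (fun x => interior (t x))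
    (fun x _ => interior_mem_nhds.2 (ht x))
  have hcover : K ⊆ ⋃ i : F₀, interior (t i.1) := by
    intro z hz
    have := hF₀.2 hz
    simp only [Set.mem_iUnion] at this ⊢
    obtain ⟨i, hi, hmem⟩ := this
    exact ⟨⟨i, hi⟩, hmem⟩
  obtain ⟨δ, hδ, hball⟩ := lebesgue_number_lemma_of_metric (c := fun i : F₀ => interior (t i.1)) hK
    (fun i => isOpen_interior) hcover
  set Lm : NNReal := F₀.sup Kf with hLm
  set C' : ℝ := max C 0 with hC'
  refine ⟨max (Lm : ℝ) (2 * C' / δ), le_trans (Lm.coe_nonneg) (le_max_left _ _), ?_⟩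
  intro x hx y hy
  rcases lt_or_ge (dist x y) δ with hlt | hge
  · obtain ⟨i, hi⟩ := hball x hx
    have hxi : x ∈ t i.1 := interior_subset (hi (mem_ball_self hδ))
    have hyi : y ∈ t i.1 := interior_subset (hi (by simpa [mem_ball, dist_comm] using hlt))
    have h2 := (hlip i.1).dist_le_mul x hxi y hyi
    have hKle : (Kf i.1 : ℝ) ≤ (Lm : ℝ) := by
      exact_mod_cast NNReal.coe_le_coe.2 (Finset.le_sup i.2)
    calc ‖g x - g y‖ = dist (g x) (g y) := (dist_eq_norm _ _).symm
    _ ≤ (Kf i.1 : ℝ) * dist x y := h2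
    _ ≤ (Lm : ℝ) * dist x y := mul_le_mul_of_nonneg_right hKle dist_nonneg
    _ ≤ max (Lm : ℝ) (2 * C' / δ) * ‖x - y‖ := by
        rw [dist_eq_norm]
        exact mul_le_mul_of_nonneg_right (le_max_left _ _) (norm_nonneg _)
  · have h1 : ‖g x - g y‖ ≤ 2 * C' := by
      calc ‖g x - g y‖ ≤ ‖g x‖ + ‖g y‖ := norm_sub_le _ _
      _ ≤ C' + C' := add_le_add (le_max_of_le_left (hC x hx)) (le_max_of_le_left (hC y hy))
      _ = 2 * C' := by ring
    have hd : ‖x - y‖ = dist x y := (dist_eq_norm x y).symm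
    calc ‖g x - g y‖ ≤ 2 * C' := h1
    _ = (2 * C' / δ) * δ := by field_simp
    _ ≤ (2 * C' / δ) * ‖x - y‖ := by
        apply mul_le_mul_of_nonneg_left (by rw [hd]; exact hge)
        positivity
    _ ≤ _ := mul_le_mul_of_nonneg_right (le_max_right _ _) (norm_nonneg _)

lemma grad_inner {E : Type*} [NormedAddCommGroup E] [InnerProductSpace ℝ E] [CompleteSpace E]
    (f : E → ℝ) (p v : E) : fderiv ℝ f p v = ⟪gradient f p, v⟫ := by
  rw [gradient]; simp

lemma descent {E : Type*} [NormedAddCommGroup E] [InnerProductSpace ℝ E] [CompleteSpace E]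
    (f : E → ℝ) (hfd : Differentiable ℝ f) {L : ℝ} (hL : 0 ≤ L) (x y : E)
    (hlip : ∀ z ∈ segment ℝ x y, ‖gradient f z - gradient f x‖ ≤ L * ‖z - x‖) :
    f y ≤ f x + ⟪gradient f x, y - x⟫ + L / 2 * ‖y - x‖ ^ 2 := by
  set v := y - x with hv
  set φ : ℝ → ℝ := fun s => f (x + s • v) - s * ⟪gradient f x, v⟫ - L / 2 * ‖v‖ ^ 2 * s ^ 2
    with hφdef
  have hline : ∀ s : ℝ, HasDerivAt (fun s : ℝ => x + s • v) v s := by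
    intro s
    simpa using ((hasDerivAt_id s).smul_const v).const_add x
  have hφ : ∀ s : ℝ, HasDerivAt φ
      (⟪gradient f (x + s • v), v⟫ - ⟪gradient f x, v⟫ - L / 2 * ‖v‖ ^ 2 * (2 * s)) s := by
    intro s
    have h1 : HasDerivAt (fun s : ℝ => f (x + s • v)) (⟪gradient f (x + s • v), v⟫) s := by
      have := (hfd (x + s • v)).hasFDerivAt.comp_hasDerivAt s (hline s)
      rw [grad_inner] at this; exact this
    have h2 : HasDerivAt (fun s : ℝ => s * ⟪gradient f x, v⟫) (⟪gradient f x, v⟫) s := by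
      simpa using (hasDerivAt_id s).mul_const (⟪gradient f x, v⟫)
    have h3 : HasDerivAt (fun s : ℝ => L / 2 * ‖v‖ ^ 2 * s ^ 2) (L / 2 * ‖v‖ ^ 2 * (2 * s)) s := by
      have := (hasDerivAt_pow 2 s).const_mul (L / 2 * ‖v‖ ^ 2)
      simpa [mul_comm, mul_assoc] using this
    exact (h1.sub h2).sub h3
  have hderiv : ∀ s ∈ Set.Ioo (0:ℝ) 1, deriv φ s ≤ 0 := by
    intro s hs
    have hz : x + s • v ∈ segment ℝ x y := by
      rw [segment_eq_image']
      exact ⟨s, ⟨le_of_lt hs.1, le_of_lt hs.2⟩, rfl⟩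
    have hzx : (x + s • v) - x = s • v := by abel
    have hbound : ⟪gradient f (x + s • v) - gradient f x, v⟫ ≤ L * s * ‖v‖ ^ 2 := by
      calc ⟪gradient f (x + s • v) - gradient f x, v⟫
          ≤ ‖gradient f (x + s • v) - gradient f x‖ * ‖v‖ := real_inner_le_norm _ _
      _ ≤ (L * ‖(x + s • v) - x‖) * ‖v‖ :=
          mul_le_mul_of_nonneg_right (hlip _ hz) (norm_nonneg _)
      _ = L * s * ‖v‖ ^ 2 := by
          rw [hzx, norm_smul, Real.norm_eq_abs, abs_of_pos hs.1]; ring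
    rw [(hφ s).deriv]
    have : ⟪gradient f (x + s • v), v⟫ - ⟪gradient f x, v⟫
        = ⟪gradient f (x + s • v) - gradient f x, v⟫ := by
      rw [inner_sub_left]
    rw [this]
    nlinarith [hbound]
  have hanti : AntitoneOn φ (Set.Icc (0:ℝ) 1) := by
    apply antitoneOn_of_deriv_nonpos (convex_Icc 0 1)
    · exact fun s _ => ((hφ s).differentiableAt).continuousAt.continuousWithinAt
    · intro s hs
      exact ((hφ s).differentiableAt).differentiableWithinAt
    · intro s hs
      rw [interior_Icc] at hs
      exact hderiv s hs
  have h01 := hanti (Set.left_mem_Icc.2 zero_le_one) (Set.right_mem_Icc.2 zero_le_one) zero_le_one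
  have e0 : φ 0 = f x := by simp [hφdef]
  have e1 : φ 1 = f y - ⟪gradient f x, v⟫ - L / 2 * ‖v‖ ^ 2 := by
    have : x + (1:ℝ) • v = y := by rw [hv]; simp
    simp only [hφdef, this, one_pow, one_mul, mul_one]
  rw [e0, e1] at h01
  linarith

lemma gronwall_exp_aux (α : ℕ → ℝ) (hα : ∀ i, 0 ≤ α i) (Lc : ℝ) (hL : 0 ≤ Lc) (n : ℕ) :
    ∀ k, n ≤ k → (∑ i ∈ Finset.Ico n k, Lc * α i * Real.exp (Lc * ∑ j ∈ Finset.Ico n i, α j))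
      ≤ Real.exp (Lc * ∑ i ∈ Finset.Ico n k, α i) - 1 := by
  intro k hk
  induction k, hk using Nat.le_induction with
  | base => simp
  | succ k hk ih =>
    rw [Finset.sum_Ico_succ_top hk, Finset.sum_Ico_succ_top hk]
    have h0 : 1 + Lc * α k ≤ Real.exp (Lc * α k) := by
      have := Real.add_one_le_exp (Lc * α k); linarith
    have h1 : Real.exp (Lc * ∑ j ∈ Finset.Ico n k, α j) * (1 + Lc * α k)
        ≤ Real.exp (Lc * (∑ j ∈ Finset.Ico n k, α j + α k)) := by
      rw [show Lc * (∑ j ∈ Finset.Ico n k, α j + α k)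
          = Lc * ∑ j ∈ Finset.Ico n k, α j + Lc * α k by ring, Real.exp_add]
      exact mul_le_mul_of_nonneg_left h0 (Real.exp_nonneg _)
    nlinarith [Real.exp_nonneg (Lc * ∑ j ∈ Finset.Ico n k, α j), hα k]

lemma gronwall (α : ℕ → ℝ) (hα : ∀ i, 0 ≤ α i) (Lc A : ℝ) (hL : 0 ≤ Lc) (hA : 0 ≤ A)
    (n m : ℕ) (Δ : ℕ → ℝ)
    (hΔ : ∀ k, n ≤ k → k ≤ m → Δ k ≤ A + Lc * ∑ i ∈ Finset.Ico n k, α i * Δ i) :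
    ∀ k, n ≤ k → k ≤ m → Δ k ≤ A * Real.exp (Lc * ∑ i ∈ Finset.Ico n k, α i) := by
  intro k
  induction k using Nat.strong_induction_on with
  | _ k ih =>
    intro hnk hkm
    have step : ∀ i ∈ Finset.Ico n k,
        α i * Δ i ≤ α i * (A * Real.exp (Lc * ∑ j ∈ Finset.Ico n i, α j)) := by
      intro i hi
      rw [Finset.mem_Ico] at hi
      exact mul_le_mul_of_nonneg_left
        (ih i hi.2 hi.1 (le_trans (le_of_lt hi.2) hkm)) (hα i)
    calc Δ k ≤ A + Lc * ∑ i ∈ Finset.Ico n k, α i * Δ i := hΔ k hnk hkm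
    _ ≤ A + Lc * ∑ i ∈ Finset.Ico n k, α i * (A * Real.exp (Lc * ∑ j ∈ Finset.Ico n i, α j)) :=
        add_le_add_right (mul_le_mul_of_nonneg_left (Finset.sum_le_sum step) hL) A
    _ = A * (1 + ∑ i ∈ Finset.Ico n k, Lc * α i * Real.exp (Lc * ∑ j ∈ Finset.Ico n i, α j)) := by
        rw [mul_add, mul_one, Finset.mul_sum, Finset.mul_sum]
        congr 1
        exact Finset.sum_congr rfl fun i _ => by ring
    _ ≤ A * Real.exp (Lc * ∑ i ∈ Finset.Ico n k, α i) := by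
        have := gronwall_exp_aux α hα Lc hL n k hnk
        nlinarith

lemma abel_bound {E : Type*} [NormedAddCommGroup E] [NormedSpace ℝ E]
    (b : ℕ → ℝ) (v : ℕ → E) (n m : ℕ)
    (hb0 : ∀ i, 0 ≤ b i) (hbmono : ∀ i j, n ≤ i → i ≤ j → b j ≤ b i)
    (M : ℝ) (hM0 : 0 ≤ M)
    (hM : ∀ j, n ≤ j → j < m → ‖∑ i ∈ Finset.Icc n j, v i‖ ≤ M) :
    ∀ k, n ≤ k → k ≤ m → ‖∑ i ∈ Finset.Ico n k, b i • v i‖ ≤ M * b n := by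
  have key : ∀ j, n ≤ j → j < m →
      ‖(∑ i ∈ Finset.Ico n (j+1), b i • v i) - b j • (∑ i ∈ Finset.Icc n j, v i)‖
        ≤ M * (b n - b j) := by
    intro j hj
    induction j, hj using Nat.le_induction with
    | base =>
      intro _
      simp [Finset.Ico_add_one_right_eq_Icc, Finset.Icc_self]
    | succ j hj ih =>
      intro hjm
      have hjm' : j < m := lt_trans (Nat.lt_succ_self j) hjm
      have e1 : (∑ i ∈ Finset.Ico n (j+2), b i • v i) - b (j+1) • (∑ i ∈ Finset.Icc n (j+1), v i)
          = ((∑ i ∈ Finset.Ico n (j+1), b i • v i) - b j • (∑ i ∈ Finset.Icc n j, v i))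
            + (b j - b (j+1)) • (∑ i ∈ Finset.Icc n j, v i) := by
        rw [Finset.sum_Ico_succ_top (by omega : n ≤ j+1),
          Finset.sum_Icc_succ_top (by omega : n ≤ j+1), smul_add, sub_smul]
        abel
      rw [e1]
      have hb1 : b (j+1) ≤ b j := hbmono j (j+1) hj (Nat.le_succ j)
      calc _ ≤ ‖(∑ i ∈ Finset.Ico n (j+1), b i • v i) - b j • (∑ i ∈ Finset.Icc n j, v i)‖
            + ‖(b j - b (j+1)) • (∑ i ∈ Finset.Icc n j, v i)‖ := norm_add_le _ _
      _ ≤ M * (b n - b j) + (b j - b (j+1)) * M := by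
          apply add_le_add (ih hjm')
          rw [norm_smul, Real.norm_eq_abs, abs_of_nonneg (by linarith)]
          exact mul_le_mul_of_nonneg_left (hM j hj hjm') (by linarith)
      _ = M * (b n - b (j+1)) := by ring
  intro k hk hkm
  rcases Nat.eq_or_lt_of_le hk with rfl | hlt
  · simp only [Finset.Ico_self, Finset.sum_empty, norm_zero]
    exact mul_nonneg hM0 (hb0 _)
  · have hj : n ≤ k - 1 := by omega
    have hjm : k - 1 < m := by omega
    have hk1 : k - 1 + 1 = k := by omega
    have := key (k-1) hj hjm
    rw [hk1] at this
    calc ‖∑ i ∈ Finset.Ico n k, b i • v i‖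
        = ‖((∑ i ∈ Finset.Ico n k, b i • v i) - b (k-1) • (∑ i ∈ Finset.Icc n (k-1), v i))
          + b (k-1) • (∑ i ∈ Finset.Icc n (k-1), v i)‖ := by rw [sub_add_cancel]
    _ ≤ ‖(∑ i ∈ Finset.Ico n k, b i • v i) - b (k-1) • (∑ i ∈ Finset.Icc n (k-1), v i)‖
          + ‖b (k-1) • (∑ i ∈ Finset.Icc n (k-1), v i)‖ := norm_add_le _ _
    _ ≤ M * (b n - b (k-1)) + b (k-1) * M := by
        apply add_le_add this
        rw [norm_smul, Real.norm_eq_abs, abs_of_nonneg (hb0 _)]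
        exact mul_le_mul_of_nonneg_left (hM (k-1) hj hjm) (hb0 _)
    _ = M * b n := by ring

lemma arith_core (L c that G A' β Δ F : ℝ)
    (hL : 0 ≤ L) (hc1 : 1 ≤ c)
    (hth1 : that * (L * c) ≤ 1/32) (hth2 : that * L ≤ 1/32)
    (hth0 : 0 < that) (hth3 : that ≤ 1/32)
    (hG : 0 ≤ G) (hA' : 0 ≤ A') (hβ0 : 0 ≤ β) (hβ : β ≤ that)
    (hΔ0 : 0 ≤ Δ) (hΔ : Δ ≤ β * G + A' + L * β * (c * (that * G + A')))
    (hF : F ≤ -(β * G^2) + L * β * (c * (that * G + A')) * G + A' * G + L/2 * Δ^2) :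
    F ≤ -(9/10) * (β * G^2) + (33/32) * (A' * G) + 2 * L * A'^2 := by
  have hDle : L * β * (c * (that * G + A')) ≤ (1/32) * (β * G) + (1/32) * A' := by
    have e1 : L * β * (c * (that * G + A')) = (that * (L * c)) * (β * G) + (L * c * β) * A' := by
      ring
    have e2 : (that * (L * c)) * (β * G) ≤ (1/32) * (β * G) :=
      mul_le_mul_of_nonneg_right hth1 (mul_nonneg hβ0 hG)
    have e3 : (L * c * β) * A' ≤ (1/32) * A' := by
      have h4 : L * c * β ≤ that * (L * c) := by
        have := mul_le_mul_of_nonneg_left hβ (mul_nonneg hL (by linarith : (0:ℝ) ≤ c))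
        linarith [this]
      exact mul_le_mul_of_nonneg_right (h4.trans hth1) hA'
    linarith
  have hβG : 0 ≤ β * G := mul_nonneg hβ0 hG
  have hΔ2 : Δ ≤ (33/32) * (β * G + A') := by linarith
  have hsum0 : 0 ≤ β * G + A' := by linarith
  have hΔsq : Δ ^ 2 ≤ (33/32)^2 * (β * G + A') ^ 2 := by
    calc Δ ^ 2 ≤ ((33/32) * (β * G + A')) ^ 2 := by
          apply sq_le_sq' (by linarith) hΔ2
    _ = (33/32)^2 * (β * G + A') ^ 2 := by ring
  have hsq : (β * G + A') ^ 2 ≤ 2 * ((β * G) ^ 2 + A' ^ 2) := by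
    nlinarith [sq_nonneg (β * G - A')]
  have hβG2 : (β * G) ^ 2 ≤ that * (β * G ^ 2) := by
    have e5 : (β * G)^2 = (β * G^2) * β := by ring
    rw [e5]
    have h5 : (β * G ^ 2) * β ≤ (β * G ^ 2) * that :=
      mul_le_mul_of_nonneg_left hβ (mul_nonneg hβ0 (sq_nonneg G))
    linarith
  have hβG20 : 0 ≤ β * G ^ 2 := mul_nonneg hβ0 (sq_nonneg G)
  have hLΔ : L / 2 * Δ ^ 2 ≤ (33/32)^2 * ((1/32) * (β * G^2)) + (33/32)^2 * (L * A'^2) := by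
    have h6 : L / 2 * Δ ^ 2 ≤ L / 2 * ((33/32)^2 * (2 * ((β * G) ^ 2 + A' ^ 2))) := by
      apply mul_le_mul_of_nonneg_left _ (by linarith)
      calc Δ ^ 2 ≤ (33/32)^2 * (β * G + A') ^ 2 := hΔsq
      _ ≤ (33/32)^2 * (2 * ((β * G) ^ 2 + A' ^ 2)) := by
          apply mul_le_mul_of_nonneg_left hsq (by norm_num)
    have h7 : L * (β * G) ^ 2 ≤ L * (that * (β * G ^ 2)) :=
      mul_le_mul_of_nonneg_left hβG2 hL
    have h9 : (that * L) * (β * G^2) ≤ (1/32) * (β * G^2) :=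
      mul_le_mul_of_nonneg_right hth2 hβG20
    nlinarith [h6, h7, h9]
  have hcross : L * β * (c * (that * G + A')) * G ≤ (1/32) * (β * G^2) + (1/32) * (A' * G) := by
    have := mul_le_mul_of_nonneg_right hDle hG
    nlinarith [this]
  have hLA : (33/32:ℝ)^2 * (L * A'^2) ≤ 2 * (L * A'^2) := by
    have := mul_nonneg hL (sq_nonneg A'); nlinarith
  linarith [hF, hcross, hLΔ, hβG20, mul_nonneg hA' hG, hLA]

lemma arith_two (L c that C G A' β Δ F : ℝ)
    (hL : 0 ≤ L) (hc1 : 1 ≤ c)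
    (hth1 : that * (L * c) ≤ 1/32) (hth2 : that * L ≤ 1/32)
    (hth0 : 0 < that) (hth3 : that ≤ 1/32)
    (hC : C = 4 + 4 * L * c)
    (hG : 0 ≤ G) (hA' : 0 ≤ A') (hβ0 : 0 ≤ β) (hβ : β ≤ that)
    (hΔ0 : 0 ≤ Δ) (hΔ : Δ ≤ β * G + A' + L * β * (c * (that * G + A')))
    (hF : F ≤ -(β * G^2) + L * β * (c * (that * G + A')) * G + A' * G + L/2 * Δ^2) :
    F ≤ C * (A' * G + A'^2) := by
  have hcore := arith_core L c that G A' β Δ F hL hc1 hth1 hth2 hth0 hth3 hG hA' hβ0 hβ hΔ0 hΔ hF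
  have h1 : (33/32:ℝ) * (A' * G) ≤ C * (A' * G) := by
    apply mul_le_mul_of_nonneg_right _ (mul_nonneg hA' hG)
    nlinarith [mul_nonneg hL (by linarith : (0:ℝ) ≤ c)]
  have h2 : 2 * L * A'^2 ≤ C * A'^2 := by
    apply mul_le_mul_of_nonneg_right _ (sq_nonneg A')
    nlinarith [mul_nonneg hL (by linarith : (0:ℝ) ≤ c)]
  have hβG20 : 0 ≤ β * G ^ 2 := mul_nonneg hβ0 (sq_nonneg G)
  nlinarith [hcore, h1, h2, hβG20]

lemma arith_ends (L c that C G A' β Δ F : ℝ)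
    (hL : 0 ≤ L) (hc1 : 1 ≤ c)
    (hth1 : that * (L * c) ≤ 1/32) (hth2 : that * L ≤ 1/32)
    (hth0 : 0 < that) (hth3 : that ≤ 1/32)
    (hC : C = 4 + 4 * L * c)
    (hG : 0 ≤ G) (hA' : 0 ≤ A') (hβ0 : 0 ≤ β) (hβ : β ≤ that)
    (hβlow : (31/32) * that ≤ β)
    (hΔ0 : 0 ≤ Δ) (hΔ : Δ ≤ β * G + A' + L * β * (c * (that * G + A')))
    (hF : F ≤ -(β * G^2) + L * β * (c * (that * G + A')) * G + A' * G + L/2 * Δ^2) :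
    (F + that * G^2 / 2 ≤ C * (A' * G + A'^2)) ∧
    (2 * F + that * G^2 / 2 + G * Δ ≤ C * (A' * G + A'^2)) := by
  have hcore := arith_core L c that G A' β Δ F hL hc1 hth1 hth2 hth0 hth3 hG hA' hβ0 hβ hΔ0 hΔ hF
  have hc0 : (0:ℝ) ≤ c := by linarith
  have hLc0 : 0 ≤ L * c := mul_nonneg hL hc0
  have hβG20 : 0 ≤ β * G ^ 2 := mul_nonneg hβ0 (sq_nonneg G)
  have hA'G : 0 ≤ A' * G := mul_nonneg hA' hG
  have hA'2 : 0 ≤ A' ^ 2 := sq_nonneg A'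
  have hthβ : that * G ^ 2 ≤ (32/31) * (β * G ^ 2) := by
    have h0 : that ≤ (32/31) * β := by linarith
    have := mul_le_mul_of_nonneg_right h0 (sq_nonneg G)
    linarith [this]
  have h1 : (33/32:ℝ) * (A' * G) ≤ C * (A' * G) := by
    apply mul_le_mul_of_nonneg_right _ hA'G
    nlinarith [hLc0]
  have h2 : 2 * L * A' ^ 2 ≤ C * A' ^ 2 := by
    apply mul_le_mul_of_nonneg_right _ hA'2
    nlinarith [hLc0]
  constructor
  · nlinarith [hcore, hthβ, h1, h2, hβG20]
  · -- bound `G * Δ`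
    have hDle : L * β * (c * (that * G + A')) ≤ (1/32) * (β * G) + (1/32) * A' := by
      have e1 : L * β * (c * (that * G + A')) = (that * (L * c)) * (β * G) + (L * c * β) * A' := by
        ring
      have e2 : (that * (L * c)) * (β * G) ≤ (1/32) * (β * G) :=
        mul_le_mul_of_nonneg_right hth1 (mul_nonneg hβ0 hG)
      have e3 : (L * c * β) * A' ≤ (1/32) * A' := by
        have h4 : L * c * β ≤ that * (L * c) := by
          have := mul_le_mul_of_nonneg_left hβ hLc0
          linarith [this]
        exact mul_le_mul_of_nonneg_right (h4.trans hth1) hA'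
      linarith
    have hΔ2 : Δ ≤ (33/32) * (β * G + A') := by linarith
    have hGΔ : G * Δ ≤ (33/32) * (β * G ^ 2) + (33/32) * (A' * G) := by
      have := mul_le_mul_of_nonneg_left hΔ2 hG
      nlinarith [this]
    have h3 : (99/32:ℝ) * (A' * G) ≤ C * (A' * G) := by
      apply mul_le_mul_of_nonneg_right _ hA'G
      nlinarith [hLc0]
    have h4 : 4 * L * A' ^ 2 ≤ C * A' ^ 2 := by
      apply mul_le_mul_of_nonneg_right _ hA'2
      nlinarith [hLc0]
    nlinarith [hcore, hthβ, hGΔ, h3, h4, hβG20]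

end blocks

lemma le_biSup_Ico (F : ℕ → ℝ) (hF : ∀ k, 0 ≤ F k) (s t j : ℕ) (hj : j ∈ Set.Ico s t) :
    F j ≤ ⨆ k ∈ Set.Ico s t, F k := by
  have hb : BddAbove (Set.range fun k => ⨆ _ : k ∈ Set.Ico s t, F k) := by
    refine ⟨∑ k ∈ Finset.Ico s t, F k, ?_⟩
    rintro y ⟨k, rfl⟩
    by_cases hk : k ∈ Set.Ico s t
    · show (⨆ _ : k ∈ Set.Ico s t, F k) ≤ _
      rw [ciSup_pos hk]
      exact Finset.single_le_sum (fun i _ => hF i) (by simpa [Finset.mem_Ico] using hk)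
    · show (⨆ _ : k ∈ Set.Ico s t, F k) ≤ _
      have : IsEmpty (k ∈ Set.Ico s t) := by simpa using hk
      rw [Real.iSup_of_isEmpty]
      exact Finset.sum_nonneg (fun i _ => hF i)
  have h1 : (⨆ _ : j ∈ Set.Ico s t, F j) ≤ ⨆ k ∈ Set.Ico s t, F k := le_ciSup hb j
  rw [ciSup_pos hj] at h1
  exact h1

section key
variable {d : ℕ}

lemma key_det
    (f : EuclideanSpace ℝ (Fin d) → ℝ)
    (hfd : Differentiable ℝ f)
    (hlip : LocallyLipschitz (fun x => gradient f x))
    (α : ℕ → ℝ) (hαpos : ∀ n, 0 < α n)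
    (hα0 : Tendsto α atTop (nhds 0))
    (γ : ℕ → ℝ) (hγ : ∀ n, γ n = ∑ i ∈ Finset.range n, α i)
    (hαdiv : Tendsto γ atTop atTop)
    (a : ℕ → ℝ → ℕ)
    (ha : ∀ n t, 0 < t → a n t = sSup {k | n ≤ k ∧ γ k - γ n ≤ t})
    (r : ℝ) (hr : 1 < r)
    (x u : ℕ → EuclideanSpace ℝ (Fin d))
    (hrec : ∀ n, x (n + 1) = x n - α n • (gradient f (x n) + u n))
    (B : ℝ) (hB : ∀ n, ‖x n‖ ≤ B)
    (noise : ℕ → ℝ)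
    (hnoise : ∀ n, noise n =
      ⨆ k ∈ Set.Ico n (a n 1), ‖∑ i ∈ Finset.Icc n k, (α i * γ i ^ r) • u i‖)
    (hbdd : IsBoundedUnder (· ≤ ·) atTop noise)
    (Ξ : ℝ) (hΞ : Ξ = limsup noise atTop) :
    ∃ C t : ℝ, 1 ≤ C ∧ 0 < t ∧ t < 1 ∧ ∀ ε : ℝ, 0 < ε → ∃ N : ℕ, ∀ n, N < n →
      (∀ k, n ≤ k → k ≤ a n t →
        ‖x k - x n‖ ≤ C * (‖gradient f (x n)‖ + γ n ^ (-r) * (Ξ + ε))) ∧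
      (∀ k, n ≤ k → k ≤ a n t →
        f (x k) - f (x n) ≤ C * (γ n ^ (-r) * ‖gradient f (x n)‖ * (Ξ + ε) +
          γ n ^ (-(2 * r)) * (Ξ + ε) ^ 2)) ∧
      (f (x (a n t)) - f (x n) + t * ‖gradient f (x n)‖ ^ 2 / 2 ≤
        C * (γ n ^ (-r) * ‖gradient f (x n)‖ * (Ξ + ε) +
          γ n ^ (-(2 * r)) * (Ξ + ε) ^ 2)) ∧
      (2 * (f (x (a n t)) - f (x n)) + t * ‖gradient f (x n)‖ ^ 2 / 2 +
          ‖gradient f (x n)‖ * ‖x (a n t) - x n‖ ≤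
        C * (γ n ^ (-r) * ‖gradient f (x n)‖ * (Ξ + ε) +
          γ n ^ (-(2 * r)) * (Ξ + ε) ^ 2)) := by
  classical
  have hγmono : Monotone γ := by
    intro i j hij
    rw [hγ i, hγ j]
    exact Finset.sum_le_sum_of_subset_of_nonneg (Finset.range_subset_range.2 hij)
      (fun k _ _ => (hαpos k).le)
  have hγdiff : ∀ {i j : ℕ}, i ≤ j → γ j - γ i = ∑ k ∈ Finset.Ico i j, α k := by
    intro i j hij
    rw [hγ i, hγ j, Finset.sum_Ico_eq_sub _ hij]
  have hγpos : ∀ {i : ℕ}, 1 ≤ i → 0 < γ i := by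
    intro i hi
    rw [hγ i]
    exact Finset.sum_pos (fun j _ => hαpos j) (Finset.nonempty_range_iff.2 (by omega))
  have hγ0 : ∀ i, 0 ≤ γ i := by
    intro i; rw [hγ i]; exact Finset.sum_nonneg fun j _ => (hαpos j).le
  -- properties of a n t
  have haMem : ∀ (n : ℕ) (t : ℝ), 0 < t → n ≤ a n t ∧ γ (a n t) - γ n ≤ t := by
    intro n t ht
    have hne : ({k | n ≤ k ∧ γ k - γ n ≤ t} : Set ℕ).Nonempty := ⟨n, le_refl n, by simp [ht.le]⟩
    have hbd : BddAbove {k | n ≤ k ∧ γ k - γ n ≤ t} := by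
      obtain ⟨m, hm⟩ := eventually_atTop.1 (hαdiv.eventually_gt_atTop (γ n + t))
      refine ⟨m, fun k hk => ?_⟩
      by_contra h
      push_neg at h
      have := hm k h.le
      linarith [hk.2]
    have := Nat.sSup_mem hne hbd
    rw [← ha n t ht] at this
    exact this
  have haLe : ∀ (n k : ℕ) (t : ℝ), 0 < t → n ≤ k → γ k - γ n ≤ t → k ≤ a n t := by
    intro n k t ht hk1 hk2
    have hbd : BddAbove {k | n ≤ k ∧ γ k - γ n ≤ t} := by
      obtain ⟨m, hm⟩ := eventually_atTop.1 (hαdiv.eventually_gt_atTop (γ n + t))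
      refine ⟨m, fun j hj => ?_⟩
      by_contra h
      push_neg at h
      have := hm j h.le
      linarith [hj.2]
    rw [ha n t ht]
    exact le_csSup hbd ⟨hk1, hk2⟩
  -- Lipschitz constant on the ball
  obtain ⟨L, hL0, hLip⟩ := locLip_bound (fun y => gradient f y) hlip
    (isCompact_closedBall (0 : EuclideanSpace ℝ (Fin d)) B)
  have hmem : ∀ i, x i ∈ closedBall (0 : EuclideanSpace ℝ (Fin d)) B := fun i =>
    mem_closedBall_zero_iff.2 (hB i)
  have hgl : ∀ i j, ‖gradient f (x i) - gradient f (x j)‖ ≤ L * ‖x i - x j‖ := fun i j =>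
    hLip _ (hmem i) _ (hmem j)
  -- constants
  set c := Real.exp L with hc
  have hc1 : 1 ≤ c := Real.one_le_exp hL0
  have hc0 : (0:ℝ) ≤ c := by linarith
  have hLc0 : 0 ≤ L * c := mul_nonneg hL0 hc0
  set K := 1 + L * c + 2 * L with hKdef
  have hK1 : 1 ≤ K := by nlinarith
  have hK0 : 0 < K := by linarith
  set that := 1 / (32 * K) with hthdef
  have hth0 : 0 < that := by positivity
  have hthK : that * K = 1 / 32 := by
    rw [hthdef]; field_simp
  have hth3 : that ≤ 1 / 32 := by nlinarith
  have hth1 : that * (L * c) ≤ 1 / 32 := by nlinarith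
  have hth2 : that * L ≤ 1 / 32 := by nlinarith
  have hthlt1 : that < 1 := lt_of_le_of_lt hth3 (by norm_num)
  set C := 4 + 4 * L * c with hCdef
  have hC1 : 1 ≤ C := by nlinarith
  have hcC : c ≤ C := by
    rcases le_total L 1 with h | h
    · have h1 : c ≤ Real.exp 1 := Real.exp_le_exp.2 h
      have h2 := Real.exp_one_lt_d9
      nlinarith
    · nlinarith
  refine ⟨C, that, hC1, hth0, hthlt1, ?_⟩
  intro ε hε
  have hnoise0 : ∀ i, 0 ≤ noise i := fun i => by
    rw [hnoise i]
    exact Real.iSup_nonneg fun k => Real.iSup_nonneg fun _ => norm_nonneg _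
  have hΞ0 : 0 ≤ Ξ := by
    rw [hΞ]
    exact le_limsup_of_frequently_le (Frequently.of_forall hnoise0) hbdd
  have hE : 0 < Ξ + ε := by linarith
  obtain ⟨N₁, hN₁⟩ := eventually_atTop.1
    (eventually_lt_of_limsup_lt
      (show limsup noise atTop < Ξ + ε by rw [← hΞ]; linarith) hbdd)
  obtain ⟨N₂, hN₂⟩ := eventually_atTop.1
    (hα0.eventually_lt_const (by positivity : (0:ℝ) < that / 32))
  refine ⟨max (max N₁ N₂) 1, ?_⟩
  intro n hn
  have hnN₁ : N₁ ≤ n :=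
    le_of_lt (lt_of_le_of_lt (le_trans (le_max_left N₁ N₂) (le_max_left _ 1)) hn)
  have hnN₂ : N₂ ≤ n :=
    le_of_lt (lt_of_le_of_lt (le_trans (le_max_right N₁ N₂) (le_max_left _ 1)) hn)
  have hn1 : 1 ≤ n := le_of_lt (lt_of_le_of_lt (le_max_right _ 1) hn)
  have hγn : 0 < γ n := hγpos hn1
  have hG0 : 0 ≤ ‖gradient f (x n)‖ := norm_nonneg _
  have hA'0 : 0 ≤ γ n ^ (-r) * (Ξ + ε) := mul_nonneg (Real.rpow_nonneg (hγ0 n) _) hE.le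
  obtain ⟨hmn, hmt⟩ := haMem n that hth0
  have hm1 : a n that ≤ a n 1 :=
    haLe n (a n that) 1 one_pos hmn (le_trans hmt (le_of_lt hthlt1))
  have hαm : γ (a n that + 1) - γ (a n that) = α (a n that) := by
    rw [hγ (a n that + 1), hγ (a n that), Finset.sum_range_succ]; ring
  have hsucc : that < γ (a n that + 1) - γ n := by
    by_contra h
    push_neg at h
    have := haLe n (a n that + 1) that hth0 (by omega) h
    omega
  have hβlow : (31/32) * that ≤ γ (a n that) - γ n := by
    have h1 : α (a n that) < that / 32 := hN₂ _ (le_trans hnN₂ hmn)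
    linarith [hαm, hsucc]
  have hβth : ∀ k, k ≤ a n that → γ k - γ n ≤ that := fun k hk =>
    le_trans (sub_le_sub_right (hγmono hk) (γ n)) hmt
  have hβ0 : ∀ k, n ≤ k → 0 ≤ γ k - γ n := fun k hk => sub_nonneg.2 (hγmono hk)
  -- noise partial sums
  have hS : ∀ j, n ≤ j → j < a n 1 →
      ‖∑ i ∈ Finset.Icc n j, (α i * γ i ^ r) • u i‖ ≤ Ξ + ε := by
    intro j hj1 hj2
    have hle : ‖∑ i ∈ Finset.Icc n j, (α i * γ i ^ r) • u i‖ ≤ noise n := by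
      rw [hnoise n]
      exact le_biSup_Ico (fun k => ‖∑ i ∈ Finset.Icc n k, (α i * γ i ^ r) • u i‖)
        (fun k => norm_nonneg _) n (a n 1) j ⟨hj1, hj2⟩
    exact le_trans hle (le_of_lt (hN₁ n hnN₁))
  -- noise sum bound via Abel summation
  have hWsum : ∀ k, (∑ i ∈ Finset.Ico n k, α i • u i)
      = ∑ i ∈ Finset.Ico n k, (γ i ^ (-r)) • ((α i * γ i ^ r) • u i) := by
    intro k
    apply Finset.sum_congr rfl
    intro i hi
    rw [Finset.mem_Ico] at hi
    have hγi : 0 < γ i := hγpos (le_trans hn1 hi.1)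
    rw [smul_smul]
    congr 1
    rw [mul_comm (α i) (γ i ^ r), ← mul_assoc, ← Real.rpow_add hγi]
    simp
  have hW : ∀ k, n ≤ k → k ≤ a n that →
      ‖∑ i ∈ Finset.Ico n k, α i • u i‖ ≤ γ n ^ (-r) * (Ξ + ε) := by
    intro k hk1 hk2
    rw [hWsum k]
    have hb0 : ∀ i, (0:ℝ) ≤ γ i ^ (-r) := fun i => Real.rpow_nonneg (hγ0 i) _
    have hbmono : ∀ i j, n ≤ i → i ≤ j → γ j ^ (-r) ≤ γ i ^ (-r) := by
      intro i j hi hij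
      exact Real.rpow_le_rpow_of_nonpos (hγpos (le_trans hn1 hi)) (hγmono hij) (by linarith)
    have := abel_bound (fun i => γ i ^ (-r)) (fun i => (α i * γ i ^ r) • u i) n (a n that)
      hb0 hbmono (Ξ + ε) hE.le
      (fun j hj1 hj2 => hS j hj1 (lt_of_lt_of_le hj2 hm1)) k hk1 hk2
    linarith [this]
  -- telescoped recursion
  have htel : ∀ k, n ≤ k → x k - x n =
      -(∑ i ∈ Finset.Ico n k, α i • gradient f (x i)) - ∑ i ∈ Finset.Ico n k, α i • u i := by
    intro k hk
    induction k, hk using Nat.le_induction with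
    | base => simp
    | succ k hk ih =>
      have h1 : x (k+1) - x n = (x k - x n) - α k • gradient f (x k) - α k • u k := by
        rw [hrec k, smul_add]; abel
      rw [h1, ih, Finset.sum_Ico_succ_top hk, Finset.sum_Ico_succ_top hk]
      abel
  -- the basic recursive estimate
  have hpre : ∀ k, n ≤ k → k ≤ a n that →
      ‖x k - x n‖ ≤ (γ k - γ n) * ‖gradient f (x n)‖ + γ n ^ (-r) * (Ξ + ε)
        + L * ∑ i ∈ Finset.Ico n k, α i * ‖x i - x n‖ := by
    intro k hk1 hk2
    have h0 : ‖x k - x n‖ ≤ ‖∑ i ∈ Finset.Ico n k, α i • gradient f (x i)‖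
        + ‖∑ i ∈ Finset.Ico n k, α i • u i‖ := by
      rw [htel k hk1]
      have := norm_sub_le (-(∑ i ∈ Finset.Ico n k, α i • gradient f (x i)))
        (∑ i ∈ Finset.Ico n k, α i • u i)
      rwa [norm_neg] at this
    have h1 : ‖∑ i ∈ Finset.Ico n k, α i • gradient f (x i)‖
        ≤ ∑ i ∈ Finset.Ico n k, (α i * ‖gradient f (x n)‖ + L * (α i * ‖x i - x n‖)) := by
      refine le_trans (norm_sum_le _ _) (Finset.sum_le_sum ?_)
      intro i hi
      rw [norm_smul, Real.norm_eq_abs, abs_of_pos (hαpos i)]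
      have h2 : ‖gradient f (x i)‖ ≤ ‖gradient f (x n)‖ + L * ‖x i - x n‖ := by
        have h3 := norm_add_le (gradient f (x n)) (gradient f (x i) - gradient f (x n))
        rw [add_sub_cancel] at h3
        linarith [hgl i n]
      calc α i * ‖gradient f (x i)‖
          ≤ α i * (‖gradient f (x n)‖ + L * ‖x i - x n‖) :=
            mul_le_mul_of_nonneg_left h2 (hαpos i).le
      _ = α i * ‖gradient f (x n)‖ + L * (α i * ‖x i - x n‖) := by ring
    have h4 : ∑ i ∈ Finset.Ico n k, (α i * ‖gradient f (x n)‖ + L * (α i * ‖x i - x n‖))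
        = (γ k - γ n) * ‖gradient f (x n)‖ + L * ∑ i ∈ Finset.Ico n k, α i * ‖x i - x n‖ := by
      rw [Finset.sum_add_distrib, ← Finset.sum_mul, ← Finset.mul_sum, ← hγdiff hk1]
    linarith [hW k hk1 hk2, h0, h1, h4.le, h4.ge]
  -- Grönwall
  have hgron : ∀ k, n ≤ k → k ≤ a n that →
      ‖x k - x n‖ ≤ c * (that * ‖gradient f (x n)‖ + γ n ^ (-r) * (Ξ + ε)) := by
    have hA0 : 0 ≤ that * ‖gradient f (x n)‖ + γ n ^ (-r) * (Ξ + ε) :=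
      add_nonneg (mul_nonneg hth0.le hG0) hA'0
    have hbase := gronwall α (fun i => (hαpos i).le) L
      (that * ‖gradient f (x n)‖ + γ n ^ (-r) * (Ξ + ε)) hL0 hA0 n (a n that)
      (fun k => ‖x k - x n‖) ?_
    · intro k hk1 hk2
      have h1 := hbase k hk1 hk2
      have h2 : L * ∑ i ∈ Finset.Ico n k, α i ≤ L := by
        rw [← hγdiff hk1]
        have h3 := hβth k hk2
        nlinarith [hβ0 k hk1]
      have h5 : Real.exp (L * ∑ i ∈ Finset.Ico n k, α i) ≤ c := Real.exp_le_exp.2 h2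
      calc ‖x k - x n‖
          ≤ (that * ‖gradient f (x n)‖ + γ n ^ (-r) * (Ξ + ε))
            * Real.exp (L * ∑ i ∈ Finset.Ico n k, α i) := h1
      _ ≤ (that * ‖gradient f (x n)‖ + γ n ^ (-r) * (Ξ + ε)) * c :=
          mul_le_mul_of_nonneg_left h5 hA0
      _ = c * (that * ‖gradient f (x n)‖ + γ n ^ (-r) * (Ξ + ε)) := mul_comm _ _
    · intro k hk1 hk2
      have h6 := hpre k hk1 hk2
      have h7 : (γ k - γ n) * ‖gradient f (x n)‖ ≤ that * ‖gradient f (x n)‖ :=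
        mul_le_mul_of_nonneg_right (hβth k hk2) hG0
      linarith
  -- refined bound
  have hΔref : ∀ k, n ≤ k → k ≤ a n that →
      ‖x k - x n‖ ≤ (γ k - γ n) * ‖gradient f (x n)‖ + γ n ^ (-r) * (Ξ + ε)
        + L * (γ k - γ n) * (c * (that * ‖gradient f (x n)‖ + γ n ^ (-r) * (Ξ + ε))) := by
    intro k hk1 hk2
    have h1 := hpre k hk1 hk2
    have h2 : ∑ i ∈ Finset.Ico n k, α i * ‖x i - x n‖
        ≤ (γ k - γ n) * (c * (that * ‖gradient f (x n)‖ + γ n ^ (-r) * (Ξ + ε))) := by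
      calc ∑ i ∈ Finset.Ico n k, α i * ‖x i - x n‖
          ≤ ∑ i ∈ Finset.Ico n k,
              α i * (c * (that * ‖gradient f (x n)‖ + γ n ^ (-r) * (Ξ + ε))) := by
            refine Finset.sum_le_sum ?_
            intro i hi
            rw [Finset.mem_Ico] at hi
            exact mul_le_mul_of_nonneg_left
              (hgron i hi.1 (le_trans (le_of_lt hi.2) hk2)) (hαpos i).le
      _ = (γ k - γ n) * (c * (that * ‖gradient f (x n)‖ + γ n ^ (-r) * (Ξ + ε))) := by
            rw [← Finset.sum_mul, ← hγdiff hk1]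
    nlinarith [h1, h2, hL0, mul_le_mul_of_nonneg_left h2 hL0]
  -- descent estimate
  have hdesc : ∀ k, n ≤ k → k ≤ a n that →
      f (x k) - f (x n) ≤ -((γ k - γ n) * ‖gradient f (x n)‖^2)
        + L * (γ k - γ n) * (c * (that * ‖gradient f (x n)‖ + γ n ^ (-r) * (Ξ + ε)))
            * ‖gradient f (x n)‖
        + (γ n ^ (-r) * (Ξ + ε)) * ‖gradient f (x n)‖ + L/2 * ‖x k - x n‖^2 := by
    intro k hk1 hk2
    have hdl := descent f hfd hL0 (x n) (x k) (fun z hz =>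
      hLip z ((convex_closedBall (0 : EuclideanSpace ℝ (Fin d)) B).segment_subset
        (hmem n) (hmem k) hz) (x n) (hmem n))
    have hsplit : ⟪gradient f (x n), x k - x n⟫
        = -⟪gradient f (x n), ∑ i ∈ Finset.Ico n k, α i • gradient f (x i)⟫
          - ⟪gradient f (x n), ∑ i ∈ Finset.Ico n k, α i • u i⟫ := by
      rw [htel k hk1, inner_sub_right, inner_neg_right]
    have hSin : ⟪gradient f (x n), ∑ i ∈ Finset.Ico n k, α i • gradient f (x i)⟫
        = ∑ i ∈ Finset.Ico n k, α i * ⟪gradient f (x n), gradient f (x i)⟫ := by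
      rw [inner_sum]
      exact Finset.sum_congr rfl fun i _ => real_inner_smul_right _ _ _
    have hterm : ∀ i ∈ Finset.Ico n k,
        α i * (‖gradient f (x n)‖^2 - ‖gradient f (x n)‖
            * (L * (c * (that * ‖gradient f (x n)‖ + γ n ^ (-r) * (Ξ + ε)))))
          ≤ α i * ⟪gradient f (x n), gradient f (x i)⟫ := by
      intro i hi
      rw [Finset.mem_Ico] at hi
      have hΔi : ‖x i - x n‖ ≤ c * (that * ‖gradient f (x n)‖ + γ n ^ (-r) * (Ξ + ε)) :=
        hgron i hi.1 (le_trans (le_of_lt hi.2) hk2)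
      have hgli : ‖gradient f (x i) - gradient f (x n)‖
          ≤ L * (c * (that * ‖gradient f (x n)‖ + γ n ^ (-r) * (Ξ + ε))) :=
        le_trans (hgl i n) (mul_le_mul_of_nonneg_left hΔi hL0)
      have hinner : -(‖gradient f (x n)‖
            * (L * (c * (that * ‖gradient f (x n)‖ + γ n ^ (-r) * (Ξ + ε)))))
          ≤ ⟪gradient f (x n), gradient f (x i) - gradient f (x n)⟫ := by
        have h1 := abs_real_inner_le_norm (gradient f (x n))
          (gradient f (x i) - gradient f (x n))
        have h2 : ‖gradient f (x n)‖ * ‖gradient f (x i) - gradient f (x n)‖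
            ≤ ‖gradient f (x n)‖
              * (L * (c * (that * ‖gradient f (x n)‖ + γ n ^ (-r) * (Ξ + ε)))) :=
          mul_le_mul_of_nonneg_left hgli hG0
        have h3 := neg_abs_le ⟪gradient f (x n), gradient f (x i) - gradient f (x n)⟫
        linarith
      have hexp : ⟪gradient f (x n), gradient f (x i)⟫
          = ‖gradient f (x n)‖^2
            + ⟪gradient f (x n), gradient f (x i) - gradient f (x n)⟫ := by
        rw [inner_sub_right, real_inner_self_eq_norm_sq]; ring
      refine mul_le_mul_of_nonneg_left ?_ (hαpos i).le
      linarith [hexp, hinner]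
    have hsum := Finset.sum_le_sum hterm
    rw [← Finset.sum_mul, ← hγdiff hk1] at hsum
    have hWb : -⟪gradient f (x n), ∑ i ∈ Finset.Ico n k, α i • u i⟫
        ≤ (γ n ^ (-r) * (Ξ + ε)) * ‖gradient f (x n)‖ := by
      have h1 := abs_real_inner_le_norm (gradient f (x n)) (∑ i ∈ Finset.Ico n k, α i • u i)
      have h2 := hW k hk1 hk2
      have h3 := neg_abs_le ⟪gradient f (x n), ∑ i ∈ Finset.Ico n k, α i • u i⟫
      nlinarith [hG0]
    rw [hsplit, hSin] at hdl
    nlinarith [hdl, hsum, hWb]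
  -- conclusion
  have hrr : γ n ^ (-(2 * r)) = (γ n ^ (-r))^2 := by
    rw [show -(2 * r) = (-r) + (-r) by ring, Real.rpow_add hγn]
    ring
  have hRHS : C * (γ n ^ (-r) * ‖gradient f (x n)‖ * (Ξ + ε) + γ n ^ (-(2 * r)) * (Ξ + ε) ^ 2)
      = C * ((γ n ^ (-r) * (Ξ + ε)) * ‖gradient f (x n)‖ + (γ n ^ (-r) * (Ξ + ε))^2) := by
    rw [hrr]; ring
  refine ⟨?_, ?_, ?_, ?_⟩
  · intro k hk1 hk2
    have h := hgron k hk1 hk2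
    have e1 : c * that ≤ C := le_trans (mul_le_of_le_one_right hc0 (le_of_lt hthlt1)) hcC
    have e2 : c * that * ‖gradient f (x n)‖ ≤ C * ‖gradient f (x n)‖ :=
      mul_le_mul_of_nonneg_right e1 hG0
    have e3 : c * (γ n ^ (-r) * (Ξ + ε)) ≤ C * (γ n ^ (-r) * (Ξ + ε)) :=
      mul_le_mul_of_nonneg_right hcC hA'0
    nlinarith [h, e2, e3]
  · intro k hk1 hk2
    have h := arith_two L c that C ‖gradient f (x n)‖ (γ n ^ (-r) * (Ξ + ε)) (γ k - γ n)
      ‖x k - x n‖ (f (x k) - f (x n)) hL0 hc1 hth1 hth2 hth0 hth3 hCdef hG0 hA'0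
      (hβ0 k hk1) (hβth k hk2) (norm_nonneg _) (hΔref k hk1 hk2) (hdesc k hk1 hk2)
    rw [hRHS]
    exact h
  · have h := arith_ends L c that C ‖gradient f (x n)‖ (γ n ^ (-r) * (Ξ + ε))
      (γ (a n that) - γ n) ‖x (a n that) - x n‖ (f (x (a n that)) - f (x n))
      hL0 hc1 hth1 hth2 hth0 hth3 hCdef hG0 hA'0
      (hβ0 _ hmn) (hβth _ (le_refl _)) hβlow (norm_nonneg _)
      (hΔref _ hmn (le_refl _)) (hdesc _ hmn (le_refl _))
    rw [hRHS]
    exact h.1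
  · have h := arith_ends L c that C ‖gradient f (x n)‖ (γ n ^ (-r) * (Ξ + ε))
      (γ (a n that) - γ n) ‖x (a n that) - x n‖ (f (x (a n that)) - f (x n))
      hL0 hc1 hth1 hth2 hth0 hth3 hCdef hG0 hA'0
      (hβ0 _ hmn) (hβth _ (le_refl _)) hβlow (norm_nonneg _)
      (hΔref _ hmn (le_refl _)) (hdesc _ hmn (le_refl _))
    rw [hRHS]
    exact h.2

end key


/-- Lemma 1.2 of the paper: under Assumptions 1.1, 1.2, 1.3
there are random variables `Ĉ₁ ∈ [1,∞)` and `t̂ ∈ (0,1)` and, for every `ε > 0`,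
a finite nonnegative integer-valued random variable `τ` such that almost surely
on `Λ`, for all `n > τ`, estimates (1)–(4) hold. -/
theorem stochastic_gradient_local_estimates
    {d : ℕ} (hd : 1 ≤ d)
    {Ω : Type} [MeasurableSpace Ω] (P : Measure Ω) [IsProbabilityMeasure P]
    (f : EuclideanSpace ℝ (Fin d) → ℝ)
    (hfd : Differentiable ℝ f)
    (hlip : LocallyLipschitz (fun x => gradient f x))
    (α : ℕ → ℝ) (hαpos : ∀ n, 0 < α n)
    (θ ξ : ℕ → Ω → EuclideanSpace ℝ (Fin d))
    (hrec : ∀ n ω, θ (n + 1) ω = θ n ω - α n • (gradient f (θ n ω) + ξ n ω))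
    -- Assumption 1.1
    (hα0 : Tendsto α atTop (nhds 0))
    (γ : ℕ → ℝ) (hγ : ∀ n, γ n = ∑ i ∈ Finset.range n, α i)
    (hαdiv : Tendsto γ atTop atTop)
    -- the interpolation index `a(n,t)`
    (a : ℕ → ℝ → ℕ)
    (ha : ∀ n t, 0 < t → a n t = sSup {k | n ≤ k ∧ γ k - γ n ≤ t})
    -- the event Λ
    (Λ : Set Ω) (hΛ : Λ = {ω | ∃ C, ∀ n, ‖θ n ω‖ ≤ C})
    -- Assumption 1.2
    (r : ℝ) (hr : 1 < r)
    (noise : ℕ → Ω → ℝ)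
    (hnoise : ∀ n ω, noise n ω =
      ⨆ k ∈ Set.Ico n (a n 1), ‖∑ i ∈ Finset.Icc n k, (α i * γ i ^ r) • ξ i ω‖)
    (hA12 : ∀ᵐ ω ∂P, ω ∈ Λ → IsBoundedUnder (· ≤ ·) atTop (fun n => noise n ω))
    (Xi : Ω → ℝ) (hXi : ∀ ω, Xi ω = Filter.limsup (fun n => noise n ω) atTop)
    -- Assumption 1.3 (Łojasiewicz-type gradient inequality)
    (hLoj : ∀ Q : Set (EuclideanSpace ℝ (Fin d)), IsCompact Q → ∀ b ∈ f '' Q,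
      ∃ δ μ M : ℝ, δ ∈ Set.Ioc (0 : ℝ) 1 ∧ μ ∈ Set.Ioc (1 : ℝ) 2 ∧ 1 ≤ M ∧
        ∀ x ∈ Q, |f x - b| ≤ δ → |f x - b| ≤ M * ‖gradient f x‖ ^ μ) :
    ∃ C₁ that : Ω → ℝ, (∀ ω, 1 ≤ C₁ ω) ∧ (∀ ω, 0 < that ω ∧ that ω < 1) ∧
      ∀ ε : ℝ, 0 < ε → ∃ τ : Ω → ℕ,
        ∀ᵐ ω ∂P, ω ∈ Λ → ∀ n, τ ω < n →
          (∀ k, n ≤ k → k ≤ a n (that ω) →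
            ‖θ k ω - θ n ω‖ ≤
              C₁ ω * (‖gradient f (θ n ω)‖ + γ n ^ (-r) * (Xi ω + ε))) ∧
          (∀ k, n ≤ k → k ≤ a n (that ω) →
            f (θ k ω) - f (θ n ω) ≤
              C₁ ω * (γ n ^ (-r) * ‖gradient f (θ n ω)‖ * (Xi ω + ε) +
                γ n ^ (-(2 * r)) * (Xi ω + ε) ^ 2)) ∧
          (f (θ (a n (that ω)) ω) - f (θ n ω) +
              that ω * ‖gradient f (θ n ω)‖ ^ 2 / 2 ≤
            C₁ ω * (γ n ^ (-r) * ‖gradient f (θ n ω)‖ * (Xi ω + ε) +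
              γ n ^ (-(2 * r)) * (Xi ω + ε) ^ 2)) ∧
          (2 * (f (θ (a n (that ω)) ω) - f (θ n ω)) +
              that ω * ‖gradient f (θ n ω)‖ ^ 2 / 2 +
              ‖gradient f (θ n ω)‖ * ‖θ (a n (that ω)) ω - θ n ω‖ ≤
            C₁ ω * (γ n ^ (-r) * ‖gradient f (θ n ω)‖ * (Xi ω + ε) +
              γ n ^ (-(2 * r)) * (Xi ω + ε) ^ 2)) := by
  
  classical
  have key : ∀ ω : Ω, ω ∈ Λ → IsBoundedUnder (· ≤ ·) atTop (fun n => noise n ω) →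
      ∃ C t : ℝ, 1 ≤ C ∧ 0 < t ∧ t < 1 ∧ ∀ ε : ℝ, 0 < ε → ∃ N : ℕ, ∀ n, N < n →
        (∀ k, n ≤ k → k ≤ a n t →
          ‖θ k ω - θ n ω‖ ≤ C * (‖gradient f (θ n ω)‖ + γ n ^ (-r) * (Xi ω + ε))) ∧
        (∀ k, n ≤ k → k ≤ a n t →
          f (θ k ω) - f (θ n ω) ≤ C * (γ n ^ (-r) * ‖gradient f (θ n ω)‖ * (Xi ω + ε) +
            γ n ^ (-(2 * r)) * (Xi ω + ε) ^ 2)) ∧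
        (f (θ (a n t) ω) - f (θ n ω) + t * ‖gradient f (θ n ω)‖ ^ 2 / 2 ≤
          C * (γ n ^ (-r) * ‖gradient f (θ n ω)‖ * (Xi ω + ε) +
            γ n ^ (-(2 * r)) * (Xi ω + ε) ^ 2)) ∧
        (2 * (f (θ (a n t) ω) - f (θ n ω)) + t * ‖gradient f (θ n ω)‖ ^ 2 / 2 +
            ‖gradient f (θ n ω)‖ * ‖θ (a n t) ω - θ n ω‖ ≤
          C * (γ n ^ (-r) * ‖gradient f (θ n ω)‖ * (Xi ω + ε) +
            γ n ^ (-(2 * r)) * (Xi ω + ε) ^ 2)) := by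
    intro ω hω hbddω
    rw [hΛ] at hω
    obtain ⟨B, hB⟩ := hω
    exact key_det f hfd hlip α hαpos hα0 γ hγ hαdiv a ha r hr
      (fun n => θ n ω) (fun n => ξ n ω) (fun n => hrec n ω) B hB
      (fun n => noise n ω) (fun n => hnoise n ω) hbddω (Xi ω) (hXi ω)
  have hchoice : ∀ ω : Ω, ∃ C t : ℝ, (1 ≤ C ∧ 0 < t ∧ t < 1) ∧
      (ω ∈ Λ → IsBoundedUnder (· ≤ ·) atTop (fun n => noise n ω) →
        ∀ ε : ℝ, 0 < ε → ∃ N : ℕ, ∀ n, N < n →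
        (∀ k, n ≤ k → k ≤ a n t →
          ‖θ k ω - θ n ω‖ ≤ C * (‖gradient f (θ n ω)‖ + γ n ^ (-r) * (Xi ω + ε))) ∧
        (∀ k, n ≤ k → k ≤ a n t →
          f (θ k ω) - f (θ n ω) ≤ C * (γ n ^ (-r) * ‖gradient f (θ n ω)‖ * (Xi ω + ε) +
            γ n ^ (-(2 * r)) * (Xi ω + ε) ^ 2)) ∧
        (f (θ (a n t) ω) - f (θ n ω) + t * ‖gradient f (θ n ω)‖ ^ 2 / 2 ≤
          C * (γ n ^ (-r) * ‖gradient f (θ n ω)‖ * (Xi ω + ε) +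
            γ n ^ (-(2 * r)) * (Xi ω + ε) ^ 2)) ∧
        (2 * (f (θ (a n t) ω) - f (θ n ω)) + t * ‖gradient f (θ n ω)‖ ^ 2 / 2 +
            ‖gradient f (θ n ω)‖ * ‖θ (a n t) ω - θ n ω‖ ≤
          C * (γ n ^ (-r) * ‖gradient f (θ n ω)‖ * (Xi ω + ε) +
            γ n ^ (-(2 * r)) * (Xi ω + ε) ^ 2))) := by
    intro ω
    by_cases h : ω ∈ Λ ∧ IsBoundedUnder (· ≤ ·) atTop (fun n => noise n ω)
    · obtain ⟨C, t, hC, ht0, ht1, hrest⟩ := key ω h.1 h.2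
      exact ⟨C, t, ⟨hC, ht0, ht1⟩, fun _ _ => hrest⟩
    · exact ⟨1, 1/2, ⟨le_refl 1, by norm_num, by norm_num⟩,
        fun hΛω hbddω => absurd ⟨hΛω, hbddω⟩ h⟩
  choose C₁ that hprop using hchoice
  refine ⟨C₁, that, fun ω => (hprop ω).1.1,
    fun ω => ⟨(hprop ω).1.2.1, (hprop ω).1.2.2⟩, ?_⟩
  intro ε hε
  have hτ : ∀ ω : Ω, ∃ N : ℕ,
      (ω ∈ Λ → IsBoundedUnder (· ≤ ·) atTop (fun n => noise n ω) →
        ∀ n, N < n →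
        (∀ k, n ≤ k → k ≤ a n (that ω) →
          ‖θ k ω - θ n ω‖ ≤ C₁ ω * (‖gradient f (θ n ω)‖ + γ n ^ (-r) * (Xi ω + ε))) ∧
        (∀ k, n ≤ k → k ≤ a n (that ω) →
          f (θ k ω) - f (θ n ω) ≤ C₁ ω * (γ n ^ (-r) * ‖gradient f (θ n ω)‖ * (Xi ω + ε) +
            γ n ^ (-(2 * r)) * (Xi ω + ε) ^ 2)) ∧
        (f (θ (a n (that ω)) ω) - f (θ n ω) + that ω * ‖gradient f (θ n ω)‖ ^ 2 / 2 ≤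
          C₁ ω * (γ n ^ (-r) * ‖gradient f (θ n ω)‖ * (Xi ω + ε) +
            γ n ^ (-(2 * r)) * (Xi ω + ε) ^ 2)) ∧
        (2 * (f (θ (a n (that ω)) ω) - f (θ n ω)) + that ω * ‖gradient f (θ n ω)‖ ^ 2 / 2 +
            ‖gradient f (θ n ω)‖ * ‖θ (a n (that ω)) ω - θ n ω‖ ≤
          C₁ ω * (γ n ^ (-r) * ‖gradient f (θ n ω)‖ * (Xi ω + ε) +
            γ n ^ (-(2 * r)) * (Xi ω + ε) ^ 2))) := by
    intro ω
    by_cases h : ω ∈ Λ ∧ IsBoundedUnder (· ≤ ·) atTop (fun n => noise n ω)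
    · obtain ⟨N, hN⟩ := (hprop ω).2 h.1 h.2 ε hε
      exact ⟨N, fun _ _ => hN⟩
    · exact ⟨0, fun hΛω hbddω => absurd ⟨hΛω, hbddω⟩ h⟩
  choose τ hτ' using hτ
  refine ⟨τ, ?_⟩
  filter_upwards [hA12] with ω hbddimp hΛω
  exact hτ' ω hΛω (hbddimp hΛω)
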